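/- Let n ≥ 1 and let A and B be Hermitian n×n complex matrices, with eigenvalues λ_1(A) ≤ … ≤ λ_n(A), λ_1(B) ≤ … ≤ λ_n(B), and let μ_1, …, μ_n be the eigenvalues of A − B, all listed with multiplicity. Let f : ℝ → ℝ be differentiable with |f′(t)| ≤ L for all t ∈ ℝ, where L ≥ 0. Then | Σ_{j=1}^{n} f(λ_j(A)) − Σ_{j=1}^{n} f(λ_j(B)) | ≤ L · Σ_{j=1}^{n} |μ_j|. (The right-hand side is L times the trace norm of A − B.) -/

import Mathlib

open Finset

section Aux
open Matrix ComplexOrder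

private lemma tlb_parseval {n : ℕ} (b : OrthonormalBasis (Fin n) ℂ (EuclideanSpace ℂ (Fin n)))
    (x : EuclideanSpace ℂ (Fin n)) :
    ∑ i, ‖(inner ℂ (b i) x : ℂ)‖^2 = ‖x‖^2 := by
  have key := b.sum_inner_mul_inner x x
  have h2 : ∀ i : Fin n, (inner ℂ x (b i) : ℂ) * inner ℂ (b i) x
      = ((‖(inner ℂ (b i) x : ℂ)‖^2 : ℝ) : ℂ) := by
    intro i
    rw [← inner_conj_symm x, mul_comm, Complex.mul_conj']
    push_cast; ring
  rw [Fintype.sum_congr _ _ h2] at key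
  have h3 := congrArg Complex.re key
  rw [Complex.re_sum] at h3; rw [← @inner_self_eq_norm_sq ℂ]
  simp only [Complex.ofReal_re] at h3
  exact h3

private lemma tlb_coeff_zero {n : ℕ} (b : OrthonormalBasis (Fin n) ℂ (EuclideanSpace ℂ (Fin n)))
    (s : Finset (Fin n)) {x : EuclideanSpace ℂ (Fin n)}
    (hx : x ∈ Submodule.span ℂ (b '' s)) {i : Fin n} (hi : i ∉ s) :
    (inner ℂ (b i) x : ℂ) = 0 := by
  have h : x ∈ Submodule.span ℂ (⇑b.toBasis '' s) := by rwa [b.coe_toBasis]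
  rw [Module.Basis.mem_span_image] at h
  have : b.toBasis.repr x i = 0 := by
    by_contra hne
    exact hi (h (Finsupp.mem_support_iff.2 hne))
  rwa [b.coe_toBasis_repr_apply, b.repr_apply_apply] at this

private lemma tlb_rayleigh_exp {n : ℕ} {M : Matrix (Fin n) (Fin n) ℂ} (hM : M.IsHermitian)
    (x : EuclideanSpace ℂ (Fin n)) :
    (inner ℂ x (Matrix.toEuclideanLin M x) : ℂ)
      = ∑ i, (hM.eigenvalues i : ℂ) * ((‖(inner ℂ (hM.eigenvectorBasis i) x : ℂ)‖^2 : ℝ) : ℂ) := by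
  have key := (hM.eigenvectorBasis.sum_inner_mul_inner x (Matrix.toEuclideanLin M x)).symm
  rw [key]
  congr 1; funext i
  have h1 : Matrix.toEuclideanLin M (hM.eigenvectorBasis i)
      = (hM.eigenvalues i : ℂ) • (hM.eigenvectorBasis i) := by
    apply PiLp.ext; intro j
    have := congrFun (hM.mulVec_eigenvectorBasis i) j
    simpa [Matrix.toEuclideanLin_apply, Matrix.mulVec] using this
  have h2 : (inner ℂ (hM.eigenvectorBasis i) (Matrix.toEuclideanLin M x) : ℂ)
      = (hM.eigenvalues i : ℂ) * inner ℂ (hM.eigenvectorBasis i) x := by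
    rw [← (Matrix.isHermitian_iff_isSymmetric.1 hM) (hM.eigenvectorBasis i) x, h1,
      inner_smul_left]
    simp
  rw [h2, ← inner_conj_symm x, ← mul_assoc, mul_comm _ ((hM.eigenvalues i : ℂ)), mul_assoc]
  congr 1
  rw [mul_comm, Complex.mul_conj']
  push_cast; ring

private lemma tlb_rayleigh_re {n : ℕ} {M : Matrix (Fin n) (Fin n) ℂ} (hM : M.IsHermitian)
    (x : EuclideanSpace ℂ (Fin n)) :
    (inner ℂ x (Matrix.toEuclideanLin M x) : ℂ).re
      = ∑ i, hM.eigenvalues i * ‖(inner ℂ (hM.eigenvectorBasis i) x : ℂ)‖^2 := by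
  rw [tlb_rayleigh_exp hM x, Complex.re_sum]
  congr 1; funext i
  rw [← Complex.ofReal_mul, Complex.ofReal_re]

private lemma tlb_rayleigh_le {n : ℕ} {M : Matrix (Fin n) (Fin n) ℂ} (hM : M.IsHermitian)
    (s : Finset (Fin n)) (a : ℝ) (ha : ∀ i ∈ s, hM.eigenvalues i ≤ a)
    {x : EuclideanSpace ℂ (Fin n)}
    (hx : x ∈ Submodule.span ℂ (hM.eigenvectorBasis '' s)) :
    (inner ℂ x (Matrix.toEuclideanLin M x) : ℂ).re ≤ a * ‖x‖^2 := by
  rw [tlb_rayleigh_re hM x, ← tlb_parseval hM.eigenvectorBasis x, Finset.mul_sum]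
  rw [← Finset.sum_subset (Finset.subset_univ s)
    (fun i _ hi => by rw [tlb_coeff_zero hM.eigenvectorBasis s hx hi]; simp),
    ← Finset.sum_subset (Finset.subset_univ s)
    (fun i _ hi => by rw [tlb_coeff_zero hM.eigenvectorBasis s hx hi]; simp)]
  exact Finset.sum_le_sum fun i hi =>
    mul_le_mul_of_nonneg_right (ha i hi) (by positivity)

private lemma tlb_rayleigh_ge {n : ℕ} {M : Matrix (Fin n) (Fin n) ℂ} (hM : M.IsHermitian)
    (s : Finset (Fin n)) (a : ℝ) (ha : ∀ i ∈ s, a ≤ hM.eigenvalues i)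
    {x : EuclideanSpace ℂ (Fin n)}
    (hx : x ∈ Submodule.span ℂ (hM.eigenvectorBasis '' s)) :
    a * ‖x‖^2 ≤ (inner ℂ x (Matrix.toEuclideanLin M x) : ℂ).re := by
  rw [tlb_rayleigh_re hM x, ← tlb_parseval hM.eigenvectorBasis x, Finset.mul_sum]
  rw [← Finset.sum_subset (Finset.subset_univ s)
    (fun i _ hi => by rw [tlb_coeff_zero hM.eigenvectorBasis s hx hi]; simp),
    ← Finset.sum_subset (Finset.subset_univ s)
    (fun i _ hi => by rw [tlb_coeff_zero hM.eigenvectorBasis s hx hi]; simp)]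
  exact Finset.sum_le_sum fun i hi =>
    mul_le_mul_of_nonneg_right (ha i hi) (by positivity)

private lemma tlb_finrank_span_ob {n : ℕ}
    (b : OrthonormalBasis (Fin n) ℂ (EuclideanSpace ℂ (Fin n))) (s : Finset (Fin n)) :
    Module.finrank ℂ (Submodule.span ℂ (b '' s)) = s.card := by
  have hb : ⇑b.toBasis = ⇑b := b.coe_toBasis
  have hli : LinearIndependent ℂ (⇑b ∘ (Subtype.val : {i : Fin n // i ∈ s} → Fin n)) := by
    rw [← hb]
    exact b.toBasis.linearIndependent.comp (Subtype.val : {i : Fin n // i ∈ s} → Fin n)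
      Subtype.val_injective
  have h2 := finrank_span_eq_card hli
  rw [Set.range_comp] at h2
  have h3 : (Set.range (Subtype.val : {i : Fin n // i ∈ s} → Fin n)) = (s : Set (Fin n)) :=
    Subtype.range_coe
  rw [h3] at h2
  rw [h2, Fintype.card_coe]

private lemma tlb_weyl {n : ℕ} {X Y : Matrix (Fin n) (Fin n) ℂ} (hX : X.IsHermitian)
    (hY : Y.IsHermitian) (hd : (Y - X).PosSemidef) (j : Fin n) :
    hX.eigenvalues (Tuple.sort hX.eigenvalues j) ≤ hY.eigenvalues (Tuple.sort hY.eigenvalues j) := by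
  set σ := Tuple.sort hX.eigenvalues with hσ
  set τ := Tuple.sort hY.eigenvalues with hτ
  set sT : Finset (Fin n) := (Finset.Ici j).image σ with hsT
  set sS : Finset (Fin n) := (Finset.Iic j).image τ with hsS
  set T := Submodule.span ℂ (hX.eigenvectorBasis '' sT) with hT
  set S := Submodule.span ℂ (hY.eigenvectorBasis '' sS) with hS
  have hcardT : sT.card = n - j := by
    rw [hsT, Finset.card_image_of_injective _ σ.injective, Fin.card_Ici]
  have hcardS : sS.card = j + 1 := by
    rw [hsS, Finset.card_image_of_injective _ τ.injective, Fin.card_Iic]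
  have hnd : ¬ Disjoint S T := by
    intro h
    have hle := Submodule.finrank_add_finrank_le_of_disjoint h
    rw [tlb_finrank_span_ob, tlb_finrank_span_ob, hcardS, hcardT,
      finrank_euclideanSpace_fin] at hle
    omega
  rw [Submodule.disjoint_def] at hnd
  push_neg at hnd
  obtain ⟨x, hxS, hxT, hx0⟩ := hnd
  have hxn : (0:ℝ) < ‖x‖^2 := by have := norm_pos_iff.mpr hx0; positivity
  have h1 : hX.eigenvalues (σ j) * ‖x‖^2 ≤ (inner ℂ x (Matrix.toEuclideanLin X x) : ℂ).re := by
    refine tlb_rayleigh_ge hX sT _ ?_ hxT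
    intro i hi
    rw [hsT] at hi
    obtain ⟨k, hk, rfl⟩ := Finset.mem_image.1 hi
    exact Tuple.monotone_sort hX.eigenvalues (Finset.mem_Ici.1 hk)
  have h2 : (inner ℂ x (Matrix.toEuclideanLin Y x) : ℂ).re ≤ hY.eigenvalues (τ j) * ‖x‖^2 := by
    refine tlb_rayleigh_le hY sS _ ?_ hxS
    intro i hi
    rw [hsS] at hi
    obtain ⟨k, hk, rfl⟩ := Finset.mem_image.1 hi
    exact Tuple.monotone_sort hY.eigenvalues (Finset.mem_Iic.1 hk)
  have h3 : (inner ℂ x (Matrix.toEuclideanLin X x) : ℂ).re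
      ≤ (inner ℂ x (Matrix.toEuclideanLin Y x) : ℂ).re := by
    have hpos := hd.re_dotProduct_nonneg (WithLp.equiv 2 _ x)
    have heq : (inner ℂ x (Matrix.toEuclideanLin (Y - X) x) : ℂ)
        = inner ℂ x (Matrix.toEuclideanLin Y x) - inner ℂ x (Matrix.toEuclideanLin X x) := by
      rw [map_sub, LinearMap.sub_apply, inner_sub_right]
    have hpos' : 0 ≤ (inner ℂ x (Matrix.toEuclideanLin (Y - X) x) : ℂ).re := by
      rw [EuclideanSpace.inner_eq_star_dotProduct, Matrix.ofLp_toEuclideanLin_apply,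
        dotProduct_comm]
      exact hpos
    rw [heq, Complex.sub_re] at hpos'
    linarith
  have := le_trans h1 (le_trans h3 h2)
  exact le_of_mul_le_mul_right (by linarith) hxn

variable {n : ℕ} {C : Matrix (Fin n) (Fin n) ℂ} (hC : C.IsHermitian)

private noncomputable def tlbP : Matrix (Fin n) (Fin n) ℂ :=
  (hC.eigenvectorUnitary : Matrix (Fin n) (Fin n) ℂ)
    * diagonal (fun i => ((max (hC.eigenvalues i) 0 : ℝ) : ℂ))
    * star (hC.eigenvectorUnitary : Matrix (Fin n) (Fin n) ℂ)

private noncomputable def tlbN : Matrix (Fin n) (Fin n) ℂ :=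
  (hC.eigenvectorUnitary : Matrix (Fin n) (Fin n) ℂ)
    * diagonal (fun i => ((max (-hC.eigenvalues i) 0 : ℝ) : ℂ))
    * star (hC.eigenvectorUnitary : Matrix (Fin n) (Fin n) ℂ)

private lemma tlb_diag_psd (d : Fin n → ℝ) (hd : ∀ i, 0 ≤ d i) :
    (Matrix.diagonal (fun i => ((d i : ℝ) : ℂ))).PosSemidef := by
  refine Matrix.PosSemidef.diagonal ?_
  intro i
  simp only [Pi.zero_apply]
  rw [Complex.zero_le_real]
  exact hd i

private lemma tlbP_posSemidef : (tlbP hC).PosSemidef :=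
  (tlb_diag_psd (fun i => max (hC.eigenvalues i) 0)
    (fun i => le_max_right _ _)).mul_mul_conjTranspose_same _

private lemma tlbN_posSemidef : (tlbN hC).PosSemidef :=
  (tlb_diag_psd (fun i => max (-hC.eigenvalues i) 0)
    (fun i => le_max_right _ _)).mul_mul_conjTranspose_same _

private lemma tlbP_sub_tlbN : tlbP hC - tlbN hC = C := by
  rw [tlbP, tlbN, ← Matrix.sub_mul, ← Matrix.mul_sub, diagonal_sub]
  have h : (fun i => (((max (hC.eigenvalues i) 0 : ℝ) : ℂ) - ((max (-hC.eigenvalues i) 0 : ℝ) : ℂ)))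
      = RCLike.ofReal ∘ hC.eigenvalues := by
    funext i
    simp only [Function.comp_apply, ← Complex.ofReal_sub]
    have : max (hC.eigenvalues i) 0 - max (-hC.eigenvalues i) 0 = hC.eigenvalues i := by
      rcases le_total 0 (hC.eigenvalues i) with hh | hh
      · rw [max_eq_left hh, max_eq_right (by linarith)]; ring
      · rw [max_eq_right hh, max_eq_left (by linarith)]; ring
    rw [this]; rfl
  rw [h]; exact hC.spectral_theorem.symm

private lemma tlb_trace_conj (d : Fin n → ℂ) :
    ((hC.eigenvectorUnitary : Matrix (Fin n) (Fin n) ℂ) * diagonal d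
      * star (hC.eigenvectorUnitary : Matrix (Fin n) (Fin n) ℂ)).trace = ∑ i, d i := by
  rw [Matrix.trace_mul_cycle, Unitary.coe_star_mul_self, Matrix.one_mul,
    Matrix.trace_diagonal]

private lemma tlb_trace_eq_sum : C.trace = ∑ i, ((hC.eigenvalues i : ℝ) : ℂ) := by
  conv_lhs => rw [hC.spectral_theorem]
  rw [Unitary.conjStarAlgAut_apply, tlb_trace_conj hC]
  rfl


private lemma tlb_bounds {n : ℕ} (A B : Matrix (Fin n) (Fin n) ℂ)
    (hA : A.IsHermitian) (hB : B.IsHermitian) :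
    ∃ p q : Fin n → ℝ,
      ((∑ j, p j) - (∑ j, q j) = ∑ j, |(hA.sub hB).eigenvalues j|) ∧
      (∀ j : Fin n,
        |hA.eigenvalues (Tuple.sort hA.eigenvalues j)
          - hB.eigenvalues (Tuple.sort hB.eigenvalues j)| ≤ p j - q j) := by
  classical
  have hC : (A - B).IsHermitian := hA.sub hB
  have hPh : (B + tlbP hC).IsHermitian := hB.add (tlbP_posSemidef hC).isHermitian
  have hQh : (B - tlbN hC).IsHermitian := hB.sub (tlbN_posSemidef hC).isHermitian
  have hsub := tlbP_sub_tlbN hC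
  have hP' : tlbP hC = A - B + tlbN hC := sub_eq_iff_eq_add.mp hsub
  have w1 : ((B + tlbP hC) - A).PosSemidef := by
    have h : (B + tlbP hC) - A = tlbN hC := by rw [hP']; abel
    rw [h]; exact tlbN_posSemidef hC
  have w2 : (A - (B - tlbN hC)).PosSemidef := by
    have h : A - (B - tlbN hC) = tlbP hC := by rw [hP']; abel
    rw [h]; exact tlbP_posSemidef hC
  have w3 : ((B + tlbP hC) - B).PosSemidef := by
    have h : (B + tlbP hC) - B = tlbP hC := by abel
    rw [h]; exact tlbP_posSemidef hC
  have w4 : (B - (B - tlbN hC)).PosSemidef := by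
    have h : B - (B - tlbN hC) = tlbN hC := by abel
    rw [h]; exact tlbN_posSemidef hC
  refine ⟨fun j => hPh.eigenvalues (Tuple.sort hPh.eigenvalues j),
          fun j => hQh.eigenvalues (Tuple.sort hQh.eigenvalues j), ?_, ?_⟩
  · rw [Equiv.sum_comp (Tuple.sort hPh.eigenvalues) hPh.eigenvalues,
      Equiv.sum_comp (Tuple.sort hQh.eigenvalues) hQh.eigenvalues]
    have habs : ∀ i : Fin n, |hC.eigenvalues i|
        = max (hC.eigenvalues i) 0 + max (-hC.eigenvalues i) 0 := by
      intro i
      rcases le_total 0 (hC.eigenvalues i) with hh | hh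
      · rw [abs_of_nonneg hh, max_eq_left hh, max_eq_right (by linarith)]; ring
      · rw [abs_of_nonpos hh, max_eq_right hh, max_eq_left (by linarith)]; ring
    have hcast : (((∑ j, hPh.eigenvalues j) - (∑ j, hQh.eigenvalues j) : ℝ) : ℂ)
        = ((∑ j, |hC.eigenvalues j| : ℝ) : ℂ) := by
      push_cast
      rw [← tlb_trace_eq_sum hPh, ← tlb_trace_eq_sum hQh]
      have htr : (B + tlbP hC).trace - (B - tlbN hC).trace
          = (tlbP hC).trace + (tlbN hC).trace := by
        rw [Matrix.trace_add, Matrix.trace_sub]; ring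
      rw [htr, tlbP, tlbN, tlb_trace_conj hC, tlb_trace_conj hC, ← Finset.sum_add_distrib]
      congr 1; funext i
      rw [habs i]
      push_cast
      ring
    have := Complex.ofReal_injective hcast
    convert this using 2
  · intro j
    have h1 := tlb_weyl hA hPh w1 j
    have h2 := tlb_weyl hQh hA w2 j
    have h3 := tlb_weyl hB hPh w3 j
    have h4 := tlb_weyl hQh hB w4 j
    rw [abs_sub_le_iff]
    exact ⟨by linarith, by linarith⟩

end Aux

theorem trace_lipschitz_bound
    {n : ℕ} (hn : 1 ≤ n) (A B : Matrix (Fin n) (Fin n) ℂ)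
    (hA : A.IsHermitian) (hB : B.IsHermitian)
    (f : ℝ → ℝ) (L : ℝ) (hL : 0 ≤ L)
    (hf : Differentiable ℝ f) (hf' : ∀ t : ℝ, |deriv f t| ≤ L) :
    |∑ j, f (hA.eigenvalues j) - ∑ j, f (hB.eigenvalues j)|
      ≤ L * ∑ j, |(hA.sub hB).eigenvalues j| := by
  classical
  obtain ⟨p, q, hsum, hkey⟩ := tlb_bounds A B hA hB
  set σA := Tuple.sort hA.eigenvalues with hσA
  set σB := Tuple.sort hB.eigenvalues with hσB
  have mvt : ∀ a b : ℝ, |f a - f b| ≤ L * |a - b| := by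
    intro a b
    have := Convex.norm_image_sub_le_of_norm_deriv_le (s := (Set.univ : Set ℝ))
      (fun x _ => (hf x)) (fun x _ => by rw [Real.norm_eq_abs]; exact hf' x)
      convex_univ (Set.mem_univ b) (Set.mem_univ a)
    simpa [Real.norm_eq_abs] using this
  have eA : ∑ j, f (hA.eigenvalues j) = ∑ j, f (hA.eigenvalues (σA j)) :=
    (Equiv.sum_comp σA (fun i => f (hA.eigenvalues i))).symm
  have eB : ∑ j, f (hB.eigenvalues j) = ∑ j, f (hB.eigenvalues (σB j)) :=
    (Equiv.sum_comp σB (fun i => f (hB.eigenvalues i))).symm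
  rw [eA, eB, ← Finset.sum_sub_distrib]
  calc |∑ j, (f (hA.eigenvalues (σA j)) - f (hB.eigenvalues (σB j)))|
      ≤ ∑ j, |f (hA.eigenvalues (σA j)) - f (hB.eigenvalues (σB j))| :=
        Finset.abs_sum_le_sum_abs _ _
    _ ≤ ∑ j, L * (p j - q j) := by
        refine Finset.sum_le_sum fun j _ => ?_
        refine le_trans (mvt _ _) ?_
        exact mul_le_mul_of_nonneg_left (hkey j) hL
    _ = L * ∑ j, |(hA.sub hB).eigenvalues j| := by
        rw [← Finset.mul_sum, Finset.sum_sub_distrib, hsum]
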